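/- Let 0 < ε ≤ r, A ∈ ℝ^{n×n}, B ∈ ℝ^{n×m}, k ∈ ℝ^{m×n}, let d : [0,∞) → [−1,1] be measurable, and let (x, u) be a solution of the closed-loop system. Define the predictor state p(t) := e^{Ar} x(t) + ∫_t^{t+r} e^{A(t+r−s)} B u(s−r) ds for t ≥ 0. Then: (i) u(t) = k p(t) for all t ≥ 0; and (ii) p is locally absolutely continuous on [0,∞) and satisfies the differential equation ṗ(t) = (A + Bk) p(t) + e^{Ar} B k (p(t−r−εd(t)) − p(t−r)) for almost every t ≥ r + ε. -/

import Mathlib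

open MeasureTheory

/-- Matrix-vector multiplication between Euclidean spaces. -/
noncomputable def mv {n m : ℕ} (A : Matrix (Fin n) (Fin m) ℝ)
    (x : EuclideanSpace ℝ (Fin m)) : EuclideanSpace ℝ (Fin n) :=
  Matrix.toEuclideanLin A x

/-- `mexp A t = exp (t A)`, the matrix exponential. -/
noncomputable def mexp {n : ℕ} (A : Matrix (Fin n) (Fin n) ℝ) (t : ℝ) :
    Matrix (Fin n) (Fin n) ℝ :=
  NormedSpace.exp (t • A)

section helpers
variable {n m q : ℕ}

lemma mv_mul (M : Matrix (Fin n) (Fin m) ℝ) (N : Matrix (Fin m) (Fin q) ℝ)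
    (v : EuclideanSpace ℝ (Fin q)) : mv (M * N) v = mv M (mv N v) := by
  simp [mv, Matrix.toEuclideanLin_apply, Matrix.mulVec_mulVec]

lemma mv_add_left (M N : Matrix (Fin n) (Fin m) ℝ) (v : EuclideanSpace ℝ (Fin m)) :
    mv (M + N) v = mv M v + mv N v := by
  simp [mv, map_add]

lemma mv_add (M : Matrix (Fin n) (Fin m) ℝ) (v w : EuclideanSpace ℝ (Fin m)) :
    mv M (v + w) = mv M v + mv M w := map_add _ _ _

lemma mv_sub (M : Matrix (Fin n) (Fin m) ℝ) (v w : EuclideanSpace ℝ (Fin m)) :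
    mv M (v - w) = mv M v - mv M w := map_sub _ _ _

lemma mv_one (v : EuclideanSpace ℝ (Fin n)) : mv (1 : Matrix (Fin n) (Fin n) ℝ) v = v := by
  simp [mv, Matrix.toEuclideanLin_apply]

lemma clm_intervalIntegrable {E F : Type*} [NormedAddCommGroup E] [NormedSpace ℝ E]
    [NormedAddCommGroup F] [NormedSpace ℝ F] (L : E →L[ℝ] F) {f : ℝ → E} {a b : ℝ}
    (hf : IntervalIntegrable f volume a b) :
    IntervalIntegrable (fun s => L (f s)) volume a b :=
  ⟨L.integrable_comp hf.1, L.integrable_comp hf.2⟩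

lemma mexp_zero (A : Matrix (Fin n) (Fin n) ℝ) : mexp A 0 = 1 := by
  simp [mexp, NormedSpace.exp_zero]

lemma mexp_add (A : Matrix (Fin n) (Fin n) ℝ) (s t : ℝ) :
    mexp A (s + t) = mexp A s * mexp A t := by
  rw [mexp, add_smul]
  exact Matrix.exp_add_of_commute _ _ (((Commute.refl A).smul_left s).smul_right t)


lemma A_mul_mexp_comm (A : Matrix (Fin n) (Fin n) ℝ) (t : ℝ) :
    A * mexp A t = mexp A t * A := by
  letI : SeminormedRing (Matrix (Fin n) (Fin n) ℝ) := Matrix.linftyOpSemiNormedRing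
  letI : NormedRing (Matrix (Fin n) (Fin n) ℝ) := Matrix.linftyOpNormedRing
  letI : NormedAlgebra ℝ (Matrix (Fin n) (Fin n) ℝ) := Matrix.linftyOpNormedAlgebra
  exact (((Commute.refl A).smul_right t).exp_right).eq

/-- `mv` as a continuous bilinear map. -/
noncomputable def mvL (n m : ℕ) :
    Matrix (Fin n) (Fin m) ℝ →L[ℝ] EuclideanSpace ℝ (Fin m) →L[ℝ] EuclideanSpace ℝ (Fin n) :=
  LinearMap.toContinuousLinearMap
    { toFun := fun M => LinearMap.toContinuousLinearMap (Matrix.toEuclideanLin M)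
      map_add' := by intro M N; ext v; simp [map_add]
      map_smul' := by intro c M; ext v; simp [_root_.map_smul] }

lemma mvL_apply (M : Matrix (Fin n) (Fin m) ℝ) (v : EuclideanSpace ℝ (Fin m)) :
    mvL n m M v = mv M v := rfl

end helpers

lemma mexpL_hasDerivAt (A : Matrix (Fin n) (Fin n) ℝ) (t : ℝ) :
    HasDerivAt (fun s => mvL n n (mexp A s)) (mvL n n (A * mexp A t)) t := by
  letI : NormedRing (Matrix (Fin n) (Fin n) ℝ) := Matrix.linftyOpNormedRing
  letI : NormedAlgebra ℝ (Matrix (Fin n) (Fin n) ℝ) := Matrix.linftyOpNormedAlgebra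
  have h1 : HasDerivAt (fun s : ℝ => NormedSpace.exp (s • A)) (A * mexp A t) t :=
    hasDerivAt_exp_smul_const' A t
  exact ((mvL n n).hasFDerivAt.comp_hasDerivAt t h1 : _)

theorem stmt_7 (n m : ℕ) (A : Matrix (Fin n) (Fin n) ℝ)
    (B : Matrix (Fin n) (Fin m) ℝ) (k : Matrix (Fin m) (Fin n) ℝ)
    (r ε : ℝ) (hε : 0 < ε) (hεr : ε ≤ r)
    (d : ℝ → ℝ) (hd : Measurable d) (hd1 : ∀ t, 0 ≤ t → d t ∈ Set.Icc (-1 : ℝ) 1)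
    (x : ℝ → EuclideanSpace ℝ (Fin n)) (u : ℝ → EuclideanSpace ℝ (Fin m))
    (hxc : ContinuousOn x (Set.Ici 0))
    (huc : ContinuousOn u (Set.Ici (-(r + ε))))
    (hplant : ∀ t : ℝ, 0 ≤ t →
      x t = x 0 + ∫ s in (0 : ℝ)..t, (mv A (x s) + mv B (u (s - r - ε * d s))))
    (hfb : ∀ t : ℝ, 0 ≤ t →
      u t = mv k (mv (mexp A r) (x t)) +
        mv k (∫ s in t..(t + r), mv (mexp A (t + r - s)) (mv B (u (s - r)))))
    -- the predictor state
    (p : ℝ → EuclideanSpace ℝ (Fin n))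
    (hp : ∀ t : ℝ, 0 ≤ t →
      p t = mv (mexp A r) (x t) +
        ∫ s in t..(t + r), mv (mexp A (t + r - s)) (mv B (u (s - r)))) :
    -- (i) the feedback is `u = k p`
    (∀ t : ℝ, 0 ≤ t → u t = mv k (p t)) ∧
    -- (ii) `p` is locally absolutely continuous on `[0,∞)` and satisfies
    -- `ṗ = (A+Bk) p + exp(Ar) B k (p(t-r-εd(t)) - p(t-r))` for a.e. `t ≥ r+ε`
    (∃ g : ℝ → EuclideanSpace ℝ (Fin n),
      (∀ T : ℝ, 0 ≤ T → IntervalIntegrable g volume 0 T) ∧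
      (∀ t : ℝ, 0 ≤ t → p t = p 0 + ∫ s in (0 : ℝ)..t, g s) ∧
      (∀ᵐ s ∂(volume.restrict (Set.Ici (r + ε))),
        g s = mv (A + B * k) (p s) +
          mv (mexp A r * (B * k)) (p (s - r - ε * d s) - p (s - r)))) := by
  -- Part (i)
  have hi : ∀ t : ℝ, 0 ≤ t → u t = mv k (p t) := by
    intro t ht
    rw [hp t ht, mv_add]
    exact hfb t ht
  refine ⟨hi, ?_⟩
  set c : ℝ := -(r + ε) with hc
  have hcr : c < -r := by simp only [hc]; linarith
  -- basic continuity facts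
  have mexpc : Continuous fun s : ℝ => mvL n n (mexp A s) :=
    continuous_iff_continuousAt.2 fun s => (mexpL_hasDerivAt A s).continuousAt
  have huB : ContinuousOn (fun τ : ℝ => mv B (u τ)) (Set.Ici c) :=
    (mvL n m B).continuous.comp_continuousOn huc
  -- the kernel h0
  set h0 : ℝ → EuclideanSpace ℝ (Fin n) := fun τ => mv (mexp A (-τ)) (mv B (u τ)) with hh0
  have hh : ContinuousOn h0 (Set.Ici c) := by
    have : ContinuousOn (fun τ : ℝ => mvL n n (mexp A (-τ)) (mv B (u τ))) (Set.Ici c) :=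
      ContinuousOn.clm_apply ((mexpc.comp continuous_neg).continuousOn) huB
    exact this
  have hints : ∀ a b : ℝ, -r ≤ a → -r ≤ b → IntervalIntegrable h0 volume a b := by
    intro a b ha hb
    apply (hh.mono ?_).intervalIntegrable
    intro y hy
    have h1 : min a b ≤ y := hy.1
    have : -r ≤ min a b := le_min ha hb
    exact le_trans hcr.le (le_trans this h1)
  set F : ℝ → EuclideanSpace ℝ (Fin n) := fun t => ∫ τ in (0:ℝ)..t, h0 τ with hF0
  have hF : ∀ t : ℝ, -r ≤ t → HasDerivAt F (h0 t) t := by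
    intro t ht
    refine intervalIntegral.integral_hasDerivAt_right (hints 0 t (by linarith) ht) ?_ ?_
    · exact (hh.mono Set.Ioi_subset_Ici_self).stronglyMeasurableAtFilter isOpen_Ioi t
        (lt_of_lt_of_le hcr ht)
    · exact hh.continuousAt (Ici_mem_nhds (lt_of_lt_of_le hcr ht))
  set GG : ℝ → EuclideanSpace ℝ (Fin n) := fun t => mvL n n (mexp A t) (F t - F (t - r))
    with hGG0
  have hFsub : ∀ t : ℝ, 0 ≤ t → HasDerivAt (fun s => F (s - r)) (h0 (t - r)) t := by
    intro t ht
    have := (hF (t - r) (by linarith)).scomp t ((hasDerivAt_id t).sub_const r)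
    rw [one_smul] at this
    exact this
  set Gd : ℝ → EuclideanSpace ℝ (Fin n) := fun s =>
    mvL n n A (GG s) + mvL n n (mexp A s) (h0 s - h0 (s - r)) with hGd0
  have hG' : ∀ t : ℝ, 0 ≤ t → HasDerivAt GG (Gd t) t := by
    intro t ht
    have h1 := (mexpL_hasDerivAt A t).clm_apply
      ((hF t (by linarith)).sub (hFsub t ht))
    have key : mvL n n (A * mexp A t) (F t - F (t - r)) = mvL n n A (GG t) := by
      simp only [mvL_apply, hGG0]
      exact mv_mul _ _ _
    simp only [Pi.sub_apply] at h1
    rw [key] at h1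
    exact h1
  have hFc : ∀ t : ℝ, 0 ≤ t → ContinuousAt F t := fun t ht => (hF t (by linarith)).continuousAt
  have hFsubc : ∀ t : ℝ, 0 ≤ t → ContinuousAt (fun s => F (s - r)) t := by
    intro t ht
    exact ContinuousAt.comp (g := F) (f := fun s : ℝ => s - r)
      ((hF (t - r) (by linarith)).continuousAt) ((continuous_sub_right r).continuousAt)
  have hGGc : ContinuousOn GG (Set.Ici 0) := by
    apply ContinuousOn.clm_apply (mexpc.continuousOn)
    intro t ht
    exact ((hFc t ht).sub (hFsubc t ht)).continuousWithinAt
  have hh0sub : ContinuousOn (fun s => h0 s - h0 (s - r)) (Set.Ici 0) := by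
    apply ContinuousOn.sub
    · exact hh.mono fun y hy => le_trans hcr.le (le_trans (by linarith) hy)
    · apply hh.comp (Continuous.continuousOn (by fun_prop))
      intro y hy
      have : (0:ℝ) ≤ y := hy
      show c ≤ y - r
      simp only [hc]; linarith
  have hGdc : ContinuousOn Gd (Set.Ici 0) := by
    apply ContinuousOn.add
    · exact (mvL n n A).continuous.comp_continuousOn hGGc
    · exact ContinuousOn.clm_apply mexpc.continuousOn hh0sub
  -- the delayed-input term
  set γ : ℝ → ℝ := fun s => s - r - ε * d s with hγ0
  have hγm : Measurable γ := (measurable_id.sub measurable_const).sub (measurable_const.mul hd)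
  have hγge : ∀ s : ℝ, 0 ≤ s → c ≤ γ s := by
    intro s hs
    have h1 : d s ≤ 1 := (hd1 s hs).2
    have h2 : ε * d s ≤ ε * 1 := by nlinarith
    simp only [hγ0, hc]; linarith
  set utld : ℝ → EuclideanSpace ℝ (Fin m) := fun t => u (max t c) with hutld0
  have hutld : Continuous utld :=
    huc.comp_continuous (continuous_id.max continuous_const) (fun t => Set.mem_Ici.2 (le_max_right _ _))
  have hueq : ∀ s : ℝ, 0 ≤ s → u (γ s) = utld (γ s) := by
    intro s hs
    simp only [hutld0]
    rw [max_eq_left (hγge s hs)]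
  set θ : ℝ → EuclideanSpace ℝ (Fin n) := fun s => mv B (u (γ s)) with hθ0
  have hθint : ∀ T : ℝ, 0 ≤ T → IntervalIntegrable θ volume 0 T := by
    intro T hT
    rw [intervalIntegrable_iff_integrableOn_Ioc_of_le hT]
    obtain ⟨C, hC⟩ := (isCompact_Icc (a := c) (b := T)).exists_bound_of_continuousOn
      (((mvL n m B).continuous.comp hutld).continuousOn)
    have hmeas : AEStronglyMeasurable (fun s => mvL n m B (utld (γ s)))
        (volume.restrict (Set.Ioc 0 T)) :=
      ((((mvL n m B).continuous.comp hutld).measurable.comp hγm).aestronglyMeasurable).restrict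
    have hmeas2 : AEStronglyMeasurable θ (volume.restrict (Set.Ioc 0 T)) := by
      apply hmeas.congr
      rw [Filter.EventuallyEq, ae_restrict_iff' measurableSet_Ioc]
      apply ae_of_all
      intro s hs
      simp only [hθ0, ← mvL_apply]
      rw [← hueq s hs.1.le]
    apply Integrable.mono' (integrable_const C) hmeas2
    rw [ae_restrict_iff' measurableSet_Ioc]
    apply ae_of_all
    intro s hs
    have h1 : γ s ∈ Set.Icc c T := by
      constructor
      · exact hγge s hs.1.le
      · have h2 : -1 ≤ d s := (hd1 s hs.1.le).1
        have h3 : -(ε * 1) ≤ ε * d s := by nlinarith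
        simp only [hγ0]
        have := hs.2
        linarith
    have h2 := hC _ h1
    simp only [hθ0, ← mvL_apply]
    rw [hueq s hs.1.le]
    exact h2
  -- integrability of the plant integrand
  have hfint : ∀ t : ℝ, 0 ≤ t →
      IntervalIntegrable (fun s => mv A (x s) + mv B (u (s - r - ε * d s))) volume 0 t := by
    intro t ht
    apply IntervalIntegrable.add
    · apply ContinuousOn.intervalIntegrable
      have h1 : ContinuousOn (fun s => mvL n n A (x s)) (Set.uIcc 0 t) :=
        (mvL n n A).continuous.comp_continuousOn
          (hxc.mono (by rw [Set.uIcc_of_le ht]; exact fun y hy => hy.1))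
      exact h1
    · exact hθint t ht
  -- integral form for the x-part of the predictor
  have hEx : ∀ t : ℝ, 0 ≤ t → mv (mexp A r) (x t) = mv (mexp A r) (x 0) +
      ∫ s in (0:ℝ)..t, mvL n n (mexp A r) (mv A (x s) + mv B (u (s - r - ε * d s))) := by
    intro t ht
    have h1 : mvL n n (mexp A r) (x t) = mvL n n (mexp A r) (x 0) +
        ∫ s in (0:ℝ)..t, mvL n n (mexp A r) (mv A (x s) + mv B (u (s - r - ε * d s))) := by
      rw [ContinuousLinearMap.intervalIntegral_comp_comm _ (hfint t ht), ← map_add,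
        ← hplant t ht]
    exact h1
  -- predictor identity : p = exp(Ar) x + GG
  have hpG : ∀ t : ℝ, 0 ≤ t → p t = mv (mexp A r) (x t) + GG t := by
    intro t ht
    rw [hp t ht]
    congr 1
    have hker : ∀ s : ℝ, mv (mexp A (t + r - s)) (mv B (u (s - r))) =
        (fun τ => mvL n n (mexp A t) (h0 τ)) (s - r) := by
      intro s
      simp only [mvL_apply, hh0]
      have e1 : t + r - s = t + -(s - r) := by ring
      rw [e1, mexp_add, mv_mul]
    calc ∫ s in t..(t + r), mv (mexp A (t + r - s)) (mv B (u (s - r)))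
        = ∫ s in t..(t + r), (fun τ => mvL n n (mexp A t) (h0 τ)) (s - r) := by
          apply intervalIntegral.integral_congr
          intro s _
          exact hker s
      _ = ∫ τ in (t - r)..(t + r - r), mvL n n (mexp A t) (h0 τ) := by
          apply intervalIntegral.integral_comp_sub_right (fun τ => mvL n n (mexp A t) (h0 τ)) r
      _ = mvL n n (mexp A t) (∫ τ in (t - r)..t, h0 τ) := by
          rw [show t + r - r = t by ring]
          exact ContinuousLinearMap.intervalIntegral_comp_comm _
            (hints (t - r) t (by linarith) (by linarith))
      _ = GG t := by
          simp only [hGG0]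
          congr 1
          simp only [hF0]
          exact (intervalIntegral.integral_interval_sub_left
            (hints 0 t (by linarith) (by linarith))
            (hints 0 (t - r) (by linarith) (by linarith))).symm
  -- pointwise identity between the two integrands
  have hptw : ∀ s : ℝ, 0 ≤ s →
      mvL n n (mexp A r) (mv A (x s) + mv B (u (s - r - ε * d s))) + Gd s
        = mv A (p s) + mv B (u s) +
          mv (mexp A r) (mv B (u (s - r - ε * d s)) - mv B (u (s - r))) := by
    intro s hs
    have e1 : mv (mexp A s) (h0 s) = mv B (u s) := by
      simp only [hh0]
      rw [← mv_mul, ← mexp_add, show s + -s = 0 by ring, mexp_zero, mv_one]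
    have e2 : mv (mexp A s) (h0 (s - r)) = mv (mexp A r) (mv B (u (s - r))) := by
      simp only [hh0]
      rw [← mv_mul, ← mexp_add, show s + -(s - r) = r by ring]
    have e3 : mv (mexp A r) (mv A (x s)) = mv A (mv (mexp A r) (x s)) := by
      rw [← mv_mul, ← mv_mul, A_mul_mexp_comm]
    rw [hpG s hs]
    simp only [hGd0, mvL_apply]
    rw [mv_add (mexp A r), mv_sub (mexp A s), mv_sub (mexp A r), mv_add A, e1, e2, e3]
    abel
  -- the main integral identity
  have hmain : ∀ t : ℝ, 0 ≤ t → p t = p 0 + ∫ s in (0:ℝ)..t,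
      (mv A (p s) + mv B (u s) +
        mv (mexp A r) (mv B (u (s - r - ε * d s)) - mv B (u (s - r)))) := by
    intro t ht
    have hGdint : IntervalIntegrable Gd volume 0 t :=
      (hGdc.mono (by rw [Set.uIcc_of_le ht]; exact fun y hy => hy.1)).intervalIntegrable
    have hEint : IntervalIntegrable
        (fun s => mvL n n (mexp A r) (mv A (x s) + mv B (u (s - r - ε * d s)))) volume 0 t :=
      clm_intervalIntegrable _ (hfint t ht)
    have h1 : (∫ s in (0:ℝ)..t,
        (mv A (p s) + mv B (u s) +
          mv (mexp A r) (mv B (u (s - r - ε * d s)) - mv B (u (s - r)))))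
        = ∫ s in (0:ℝ)..t,
          (mvL n n (mexp A r) (mv A (x s) + mv B (u (s - r - ε * d s))) + Gd s) := by
      apply intervalIntegral.integral_congr
      intro s hs
      rw [Set.uIcc_of_le ht] at hs
      exact (hptw s hs.1).symm
    have h2 : (∫ s in (0:ℝ)..t, Gd s) = GG t - GG 0 :=
      intervalIntegral.integral_eq_sub_of_hasDerivAt
        (fun s hs => hG' s (by rw [Set.uIcc_of_le ht] at hs; exact hs.1)) hGdint
    have h3 : (∫ s in (0:ℝ)..t,
        mvL n n (mexp A r) (mv A (x s) + mv B (u (s - r - ε * d s))))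
        = mv (mexp A r) (x t) - mv (mexp A r) (x 0) := by
      rw [hEx t ht]; abel
    rw [h1, intervalIntegral.integral_add hEint hGdint, h2, h3, hpG t ht, hpG 0 le_rfl]
    abel
  -- assemble part (ii)
  refine ⟨fun s => mv A (p s) + mv B (u s) +
      mv (mexp A r) (mv B (u (s - r - ε * d s)) - mv B (u (s - r))), ?_, ?_, ?_⟩
  · intro T hT
    have hpc : ContinuousOn p (Set.uIcc 0 T) := by
      apply ContinuousOn.congr (f := fun t => mv (mexp A r) (x t) + GG t)
      · apply ContinuousOn.mono _ (by rw [Set.uIcc_of_le hT]; exact fun y hy => hy.1 :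
          Set.uIcc 0 T ⊆ Set.Ici 0)
        apply ContinuousOn.add _ hGGc
        exact (mvL n n (mexp A r)).continuous.comp_continuousOn hxc
      · intro s hs
        rw [Set.uIcc_of_le hT] at hs
        exact hpG s hs.1
    apply IntervalIntegrable.add
    apply IntervalIntegrable.add
    · exact (((mvL n n A).continuous.comp_continuousOn hpc)).intervalIntegrable
    · apply ContinuousOn.intervalIntegrable
      apply (mvL n m B).continuous.comp_continuousOn
      apply huc.mono
      rw [Set.uIcc_of_le hT]
      intro y hy
      have : (0:ℝ) ≤ y := hy.1
      show c ≤ y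
      simp only [hc]; linarith
    · apply clm_intervalIntegrable (mvL n n (mexp A r))
      apply IntervalIntegrable.sub (hθint T hT)
      apply ContinuousOn.intervalIntegrable
      apply (mvL n m B).continuous.comp_continuousOn
      apply ContinuousOn.comp huc (Continuous.continuousOn (by fun_prop))
      rw [Set.uIcc_of_le hT]
      intro y hy
      have h1 : (0:ℝ) ≤ y := hy.1
      show c ≤ y - r
      simp only [hc]; linarith
  · exact hmain
  · rw [ae_restrict_iff' measurableSet_Ici]
    apply ae_of_all
    intro s hs
    have hs0 : (0:ℝ) ≤ s := by have := hs; simp only [Set.mem_Ici] at this; linarith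
    have hsr : (0:ℝ) ≤ s - r := by have := hs; simp only [Set.mem_Ici] at this; linarith
    have hsd : (0:ℝ) ≤ s - r - ε * d s := by
      have h1 : d s ≤ 1 := (hd1 s hs0).2
      have h2 : ε * d s ≤ ε * 1 := by nlinarith
      have := hs; simp only [Set.mem_Ici] at this
      linarith
    simp only [mv_add_left, mv_mul, mv_sub, ← hi s hs0, ← hi (s - r) hsr,
      ← hi (s - r - ε * d s) hsd]
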